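/- Let T > 0, β ∈ (0, 1/2), and let M : ℝ → ℝ be twice continuously differentiable on [0,T] with M(t) > 0 for all t ∈ [0,T], M'(0) > 0, and M(t)·M''(t) − (1/(2β))·(M'(t))² ≥ 0 for all t ∈ [0,T]. Set θ := (1 − 2β)/(2β) > 0. Then: (i) the function t ↦ M(t)^{−θ} is positive, strictly decreasing and concave on [0,T], and M(t)^{−θ} ≤ M(0)^{−θ} − θ·t·M(0)^{−θ−1}·M'(0) for all t ∈ [0,T]; (ii) consequently θ·M'(0)·T < M(0), and for every t ∈ [0,T] one has M(t) ≥ M(0)^{(θ+1)/θ}·(M(0) − θ·t·M'(0))^{−1/θ}. -/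

import Mathlib

/-- Quantitative form of Levine's concavity lemma: if `M > 0` on `[0, T]`,
`M'(0) > 0` and `M·M'' - (1/(2β))·(M')² ≥ 0` on `[0, T]` with `β ∈ (0, 1/2)`,
then for `θ = (1 - 2β)/(2β)` the function `M ^ (-θ)` is positive, strictly
decreasing and concave on `[0, T]`, lies below its tangent at `0`, whence
`θ·M'(0)·T < M(0)` and `M t ≥ M(0)^((θ+1)/θ)·(M(0) - θ·t·M'(0))^(-1/θ)`. -/
theorem levine_concavity_lemma
    (T β : ℝ) (hT : 0 < T) (hβ : β ∈ Set.Ioo (0 : ℝ) (1 / 2))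
    (M M' M'' : ℝ → ℝ)
    (hM' : ∀ t ∈ Set.Icc (0 : ℝ) T, HasDerivWithinAt M (M' t) (Set.Icc (0 : ℝ) T) t)
    (hM'' : ∀ t ∈ Set.Icc (0 : ℝ) T, HasDerivWithinAt M' (M'' t) (Set.Icc (0 : ℝ) T) t)
    (hM''cont : ContinuousOn M'' (Set.Icc (0 : ℝ) T))
    (hMpos : ∀ t ∈ Set.Icc (0 : ℝ) T, 0 < M t)
    (hM'0 : 0 < M' 0)
    (hineq : ∀ t ∈ Set.Icc (0 : ℝ) T, 0 ≤ M t * M'' t - (1 / (2 * β)) * (M' t) ^ 2)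
    (θ : ℝ) (hθ : θ = (1 - 2 * β) / (2 * β)) :
    (0 < θ) ∧
    (∀ t ∈ Set.Icc (0 : ℝ) T, 0 < M t ^ (-θ)) ∧
    StrictAntiOn (fun t => M t ^ (-θ)) (Set.Icc (0 : ℝ) T) ∧
    ConcaveOn ℝ (Set.Icc (0 : ℝ) T) (fun t => M t ^ (-θ)) ∧
    (∀ t ∈ Set.Icc (0 : ℝ) T,
      M t ^ (-θ) ≤ M 0 ^ (-θ) - θ * t * M 0 ^ (-θ - 1) * M' 0) ∧
    (θ * M' 0 * T < M 0) ∧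
    (∀ t ∈ Set.Icc (0 : ℝ) T,
      M 0 ^ ((θ + 1) / θ) * (M 0 - θ * t * M' 0) ^ (-(1 / θ)) ≤ M t) := by
  obtain ⟨hβ0, hβhalf⟩ := hβ
  have h2β : 0 < 2 * β := by linarith
  have h2β1 : 2 * β < 1 := by linarith
  have hθpos : 0 < θ := by
    rw [hθ]; exact div_pos (by linarith) h2β
  have hθ1 : θ + 1 = 1 / (2 * β) := by
    rw [hθ]; field_simp; ring
  set I : Set ℝ := Set.Icc (0 : ℝ) T with hI
  have hconv : Convex ℝ I := convex_Icc 0 T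
  have hintI : interior I = Set.Ioo (0 : ℝ) T := interior_Icc
  have h0I : (0 : ℝ) ∈ I := ⟨le_refl 0, hT.le⟩
  have hTI : T ∈ I := ⟨hT.le, le_refl T⟩
  set F : ℝ → ℝ := fun t => M t ^ (-θ) with hF_def
  set F' : ℝ → ℝ := fun t => -θ * M t ^ (-θ - 1) * M' t with hF'_def
  set F'' : ℝ → ℝ :=
    fun t => -θ * M t ^ (-θ - 2) * (M t * M'' t - (θ + 1) * (M' t) ^ 2) with hF''_def
  -- basic rpow positivity
  have hrpos : ∀ t ∈ I, ∀ p : ℝ, 0 < M t ^ p := fun t ht p =>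
    Real.rpow_pos_of_pos (hMpos t ht) p
  -- rewriting rule for exponent shift
  have hshift : ∀ t ∈ I, M t ^ (-θ - 1) = M t ^ (-θ - 2) * M t := by
    intro t ht
    rw [← Real.rpow_add_one (hMpos t ht).ne' (-θ - 2)]
    congr 1; ring
  have hshift0 : M 0 ^ (-θ) = M 0 ^ (-θ - 1) * M 0 := by
    rw [← Real.rpow_add_one (hMpos 0 h0I).ne' (-θ - 1)]
    congr 1; ring
  -- derivative of F
  have hF : ∀ t ∈ I, HasDerivWithinAt F (F' t) I t := by
    intro t ht
    have := (hM' t ht).rpow_const (p := -θ) (Or.inl (hMpos t ht).ne')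
    convert this using 1
    simp only [hF'_def]; ring
  -- derivative of F'
  have hF'd : ∀ t ∈ I, HasDerivWithinAt F' (F'' t) I t := by
    intro t ht
    have hg : HasDerivWithinAt (fun s => M s ^ (-θ - 1))
        (M' t * (-θ - 1) * M t ^ (-θ - 1 - 1)) I t :=
      (hM' t ht).rpow_const (Or.inl (hMpos t ht).ne')
    have h1 := ((hg.const_mul (-θ)).mul (hM'' t ht))
    convert h1 using 1
    · rfl
    · rfl
    · rfl
    have h2 : (-θ - 1 - 1 : ℝ) = -θ - 2 := by ring
    rw [h2]
    simp only [hF''_def, hF'_def]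
    rw [hshift t ht]; ring
  have hF''le : ∀ t ∈ I, F'' t ≤ 0 := by
    intro t ht
    have hE : 0 ≤ M t * M'' t - (θ + 1) * (M' t) ^ 2 := by
      rw [hθ1]; exact hineq t ht
    have := mul_nonneg (mul_nonneg hθpos.le (hrpos t ht (-θ - 2)).le) hE
    simp only [hF''_def]
    nlinarith
  have hFcont : ContinuousOn F I := fun t ht => (hF t ht).continuousWithinAt
  have hF'cont : ContinuousOn F' I := fun t ht => (hF'd t ht).continuousWithinAt
  -- F' is antitone on I
  have hF'anti : AntitoneOn F' I := by
    refine antitoneOn_of_hasDerivWithinAt_nonpos hconv hF'cont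
      (fun t ht => ((hF'd t (interior_subset ht)).mono interior_subset))
      (fun t ht => hF''le t (interior_subset ht))
  have hF'0neg : F' 0 < 0 := by
    have h1 : 0 < θ * M 0 ^ (-θ - 1) * M' 0 :=
      mul_pos (mul_pos hθpos (hrpos 0 h0I (-θ - 1))) hM'0
    simp only [hF'_def]; nlinarith
  have hF'neg : ∀ t ∈ I, F' t < 0 := fun t ht =>
    lt_of_le_of_lt (hF'anti h0I ht ht.1) hF'0neg
  -- strict antitonicity of F
  have hFanti : StrictAntiOn F I :=
    strictAntiOn_of_hasDerivWithinAt_neg hconv hFcont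
      (fun t ht => (hF t (interior_subset ht)).mono interior_subset)
      (fun t ht => hF'neg t (interior_subset ht))
  -- concavity of F
  have hFconc : ConcaveOn ℝ I F :=
    concaveOn_of_hasDerivWithinAt2_nonpos hconv hFcont
      (fun t ht => (hF t (interior_subset ht)).mono interior_subset)
      (fun t ht => (hF'd t (interior_subset ht)).mono interior_subset)
      (fun t ht => hF''le t (interior_subset ht))
  -- tangent line bound
  have htan : ∀ t ∈ I, F t ≤ F 0 + F' 0 * t := by
    set H : ℝ → ℝ := fun t => F 0 + F' 0 * t - F t with hH_def
    have hHd : ∀ t ∈ I, HasDerivWithinAt H (F' 0 - F' t) I t := by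
      intro t ht
      have h1 : HasDerivWithinAt (fun s : ℝ => F 0 + F' 0 * s) (F' 0) I t := by
        simpa using ((hasDerivWithinAt_id t I).const_mul (F' 0)).const_add (F 0)
      exact h1.sub (hF t ht)
    have hHmono : MonotoneOn H I := by
      refine monotoneOn_of_hasDerivWithinAt_nonneg hconv
        (fun t ht => (hHd t ht).continuousWithinAt)
        (fun t ht => (hHd t (interior_subset ht)).mono interior_subset)
        (fun t ht => ?_)
      have ht' : t ∈ I := interior_subset ht
      have := hF'anti h0I ht' ht'.1
      linarith
    intro t ht
    have := hHmono h0I ht ht.1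
    simp only [hH_def] at this
    nlinarith
  have htan' : ∀ t ∈ I, M t ^ (-θ) ≤ M 0 ^ (-θ) - θ * t * M 0 ^ (-θ - 1) * M' 0 := by
    intro t ht
    have := htan t ht
    simp only [hF_def, hF'_def] at this
    nlinarith
  -- θ M'(0) T < M(0)
  have hc : 0 < M 0 ^ (-θ - 1) := hrpos 0 h0I _
  have hkey : θ * M' 0 * T < M 0 := by
    have h1 : 0 < M T ^ (-θ) := hrpos T hTI _
    have h2 := htan' T hTI
    have h3 : (θ * M' 0 * T) * M 0 ^ (-θ - 1) < M 0 * M 0 ^ (-θ - 1) := by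
      nlinarith [hshift0]
    exact (mul_lt_mul_iff_of_pos_right hc).mp h3
  refine ⟨hθpos, fun t ht => hrpos t ht (-θ), hFanti, hFconc, htan', hkey, ?_⟩
  -- final lower bound on M
  intro t ht
  have hA : 0 < M 0 - θ * t * M' 0 := by
    have h1 : θ * t * M' 0 ≤ θ * T * M' 0 := by
      have := mul_pos hθpos hM'0
      nlinarith [ht.2]
    nlinarith
  have hle : M t ^ (-θ) ≤ M 0 ^ (-θ - 1) * (M 0 - θ * t * M' 0) := by
    have h1 := htan' t ht
    nlinarith [hshift0]
  have hz : (-(1 / θ) : ℝ) ≤ 0 := by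
    have := one_div_pos.mpr hθpos; linarith
  have h2 := Real.rpow_le_rpow_of_nonpos (hrpos t ht (-θ)) hle hz
  have h3 : (M t ^ (-θ)) ^ (-(1 / θ)) = M t := by
    rw [← Real.rpow_mul (hMpos t ht).le]
    rw [show (-θ * -(1 / θ) : ℝ) = 1 by field_simp, Real.rpow_one]
  have h4 : (M 0 ^ (-θ - 1) * (M 0 - θ * t * M' 0)) ^ (-(1 / θ)) =
      M 0 ^ ((θ + 1) / θ) * (M 0 - θ * t * M' 0) ^ (-(1 / θ)) := by
    rw [Real.mul_rpow hc.le hA.le, ← Real.rpow_mul (hMpos 0 h0I).le]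
    congr 1
    rw [show ((-θ - 1) * -(1 / θ) : ℝ) = (θ + 1) / θ by field_simp; ring]
  rw [h3, h4] at h2
  exact h2
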